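/- arXiv:1703.06441 — 2 statements merged into one kernel-verified Lean document; each statement's English description precedes it below -/
import Mathlib

section
/- Let Z₁, Z₂, Z₃ be Hilbert spaces, F ∈ L(Z₁, Z₃) and G ∈ L(Z₂, Z₃) bounded linear operators. Then the following are equivalent: (a) Ran(F) ⊆ Ran(G); (b) there exists c > 0 such that ‖F* z‖ ≤ c‖G* z‖ for all z ∈ Z₃; (c) there exists a bounded operator U ∈ L(Z₁, Z₂) such that F = G ∘ U. -/
set_option maxHeartbeats 1000000
set_option linter.unusedSectionVars false


open ContinuousLinearMap

local notation "⟪" x ", " y "⟫" => @inner ℂ _ _ x y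

section Aux

theorem orthogonalProjection_eq_self_iff {E : Type*} [NormedAddCommGroup E] [InnerProductSpace ℂ E]
    {K : Submodule ℂ E} [K.HasOrthogonalProjection] {v : E} :
    (K.orthogonalProjectionOnto v : E) = v ↔ v ∈ K :=
  Submodule.starProjection_eq_self_iff

theorem sub_orthogonalProjection_mem_orthogonal {E : Type*} [NormedAddCommGroup E]
    [InnerProductSpace ℂ E] {K : Submodule ℂ E} [K.HasOrthogonalProjection] (v : E) :
    v - (K.orthogonalProjectionOnto v : E) ∈ Kᗮ :=
  Submodule.sub_starProjection_mem_orthogonal v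

variable {Z₁ Z₂ Z₃ : Type*}
    [NormedAddCommGroup Z₁] [InnerProductSpace ℂ Z₁] [CompleteSpace Z₁]
    [NormedAddCommGroup Z₂] [InnerProductSpace ℂ Z₂] [CompleteSpace Z₂]
    [NormedAddCommGroup Z₃] [InnerProductSpace ℂ Z₃] [CompleteSpace Z₃]

/-- (a) ⇒ (c) of Douglas' lemma, via the closed graph theorem. -/
theorem douglas_range_to_factor (F : Z₁ →L[ℂ] Z₃) (G : Z₂ →L[ℂ] Z₃)
    (h1 : Set.range F ⊆ Set.range G) : ∃ U : Z₁ →L[ℂ] Z₂, F = G.comp U := by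
  set K : Submodule ℂ Z₂ := (G.ker)ᗮ with hKdef
  haveI : CompleteSpace (G.ker) := G.isClosed_ker.completeSpace_coe
  choose w hw using fun x : Z₁ => h1 (Set.mem_range_self x)
  set U0 : Z₁ → Z₂ := fun x => (K.orthogonalProjectionOnto (w x) : Z₂) with hU0def
  have key : ∀ v x, G v = F x → (K.orthogonalProjectionOnto v : Z₂) = U0 x := by
    intro v x hv
    have hker : v - w x ∈ G.ker := by
      simp [LinearMap.mem_ker, map_sub, hv, hw x, sub_self]
    have h0 : K.orthogonalProjectionOnto (v - w x) = 0 :=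
      Submodule.orthogonalProjectionOnto_apply_of_mem_orthogonal
        ((G.ker).le_orthogonal_orthogonal hker)
    have h1' : K.orthogonalProjectionOnto v = K.orthogonalProjectionOnto (w x) := by
      rwa [map_sub, sub_eq_zero] at h0
    simp [hU0def, h1']
  have hGU : ∀ x, G (U0 x) = F x := by
    intro x
    have hsub : w x - (K.orthogonalProjectionOnto (w x) : Z₂) ∈ Kᗮ :=
      sub_orthogonalProjection_mem_orthogonal (K := K) (w x)
    have hKo : Kᗮ = G.ker := by
      rw [hKdef, Submodule.orthogonal_orthogonal]
    rw [hKo] at hsub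
    have h0 : G (w x - U0 x) = 0 := hsub
    rw [map_sub, sub_eq_zero] at h0
    rw [← h0, hw]
  have hmemK : ∀ x, U0 x ∈ K := fun x => SetLike.coe_mem _
  have hadd : ∀ x y, U0 (x + y) = U0 x + U0 y := by
    intro x y
    have hG : G (U0 x + U0 y) = F (x + y) := by rw [map_add, hGU, hGU, map_add]
    have hmem : U0 x + U0 y ∈ K := K.add_mem (hmemK x) (hmemK y)
    rw [← key _ _ hG, orthogonalProjection_eq_self_iff.2 hmem]
  have hsmul : ∀ (a : ℂ) (x : Z₁), U0 (a • x) = a • U0 x := by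
    intro a x
    have hG : G (a • U0 x) = F (a • x) := by rw [map_smul, hGU, map_smul]
    have hmem : a • U0 x ∈ K := K.smul_mem a (hmemK x)
    rw [← key _ _ hG, orthogonalProjection_eq_self_iff.2 hmem]
  let Ulin : Z₁ →ₗ[ℂ] Z₂ :=
    { toFun := U0, map_add' := hadd, map_smul' := hsmul }
  have hgraph : IsClosed (Ulin.graph : Set (Z₁ × Z₂)) := by
    have hset : (Ulin.graph : Set (Z₁ × Z₂)) =
        (Prod.snd ⁻¹' (K : Set Z₂)) ∩ {p : Z₁ × Z₂ | G p.2 = F p.1} := by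
      ext ⟨x, y⟩
      simp only [SetLike.mem_coe, LinearMap.mem_graph_iff, Set.mem_inter_iff,
        Set.mem_preimage, Set.mem_setOf_eq]
      constructor
      · rintro rfl
        exact ⟨hmemK x, hGU x⟩
      · rintro ⟨hyK, hGy⟩
        show y = U0 x
        rw [← key y x hGy, orthogonalProjection_eq_self_iff.2 hyK]
    rw [hset]
    exact (((G.ker).isClosed_orthogonal.preimage continuous_snd)).inter
      (isClosed_eq (G.continuous.comp continuous_snd) (F.continuous.comp continuous_fst))
  have hcont : Continuous Ulin := Ulin.continuous_of_isClosed_graph hgraph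
  exact ⟨⟨Ulin, hcont⟩, by ext x; exact (hGU x).symm⟩

/-- (b) ⇒ (c) of Douglas' lemma, via Hahn–Banach and Riesz representation. -/
theorem douglas_majorize_to_factor (F : Z₁ →L[ℂ] Z₃) (G : Z₂ →L[ℂ] Z₃)
    {c : ℝ} (hc : 0 < c) (hb : ∀ z : Z₃, ‖adjoint F z‖ ≤ c * ‖adjoint G z‖) :
    ∃ U : Z₁ →L[ℂ] Z₂, F = G.comp U := by
  have heq : ∀ z z' : Z₃, adjoint G z = adjoint G z' → adjoint F z = adjoint F z' := by
    intro z z' h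
    have h2 := hb (z - z')
    rw [map_sub, map_sub, h, sub_self, norm_zero, mul_zero] at h2
    exact sub_eq_zero.1 (norm_le_zero_iff.1 h2)
  set p : Submodule ℂ Z₂ := (adjoint G).range with hpdef
  set D : Submodule ℂ Z₂ := p.topologicalClosure with hDdef
  haveI : CompleteSpace D := p.isClosed_topologicalClosure.completeSpace_coe
  -- for each v in p, choose a preimage under adjoint G
  have hzc : ∀ v : p, ∃ z : Z₃, adjoint G z = (v : Z₂) := fun v => LinearMap.mem_range.1 v.2
  choose zc hzc using hzc
  -- uniqueness of elements of D determined by inner products against range (adjoint G)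
  have huniq : ∀ u u' : Z₂, u ∈ D → u' ∈ D →
      (∀ z : Z₃, ⟪u, adjoint G z⟫ = ⟪u', adjoint G z⟫) → u = u' := by
    intro u u' hu hu' h
    have hle : D ≤ (innerSL ℂ (u - u')).ker := by
      apply Submodule.topologicalClosure_minimal
      · rintro v ⟨z, rfl⟩
        simp only [LinearMap.mem_ker, ContinuousLinearMap.coe_coe, innerSL_apply_apply]
        rw [inner_sub_left, h z, sub_self]
      · exact ContinuousLinearMap.isClosed_ker (innerSL ℂ (u - u'))
    have h0 : ⟪u - u', u - u'⟫ = 0 := LinearMap.mem_ker.1 (hle (D.sub_mem hu hu'))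
    have := inner_self_eq_zero.1 h0
    exact sub_eq_zero.1 this
  -- construct, for each x, the element U x of D
  have hf : ∀ x : Z₁, ∃ u : Z₂, u ∈ D ∧
      (∀ z : Z₃, ⟪u, adjoint G z⟫ = ⟪x, adjoint F z⟫) ∧ ‖u‖ ≤ c * ‖x‖ := by
    intro x
    have hb0 : ∀ v : p, ‖⟪x, adjoint F (zc v)⟫‖ ≤ c * ‖x‖ * ‖(v : Z₂)‖ := by
      intro v
      calc ‖⟪x, adjoint F (zc v)⟫‖ ≤ ‖x‖ * ‖adjoint F (zc v)‖ := norm_inner_le_norm _ _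
        _ ≤ ‖x‖ * (c * ‖adjoint G (zc v)‖) :=
            mul_le_mul_of_nonneg_left (hb _) (norm_nonneg _)
        _ = c * ‖x‖ * ‖(v : Z₂)‖ := by rw [hzc v]; ring
    let f0 : p →ₗ[ℂ] ℂ :=
      { toFun := fun v => ⟪x, adjoint F (zc v)⟫
        map_add' := by
          intro v v'
          have h : adjoint G (zc (v + v')) = adjoint G (zc v + zc v') := by
            rw [map_add, hzc, hzc, hzc]; rfl
          show ⟪x, adjoint F (zc (v + v'))⟫ = ⟪x, adjoint F (zc v)⟫ + ⟪x, adjoint F (zc v')⟫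
          rw [heq _ _ h, map_add, inner_add_right]
        map_smul' := by
          intro a v
          have h : adjoint G (zc (a • v)) = adjoint G (a • zc v) := by
            rw [map_smul, hzc, hzc]; rfl
          show ⟪x, adjoint F (zc (a • v))⟫ = a • ⟪x, adjoint F (zc v)⟫
          rw [heq _ _ h, map_smul, inner_smul_right]
          rfl }
    let fc : p →L[ℂ] ℂ := f0.mkContinuous (c * ‖x‖) hb0
    obtain ⟨g, hg, hgnorm⟩ := exists_extension_norm_eq p fc
    set u' : Z₂ := (InnerProductSpace.toDual ℂ Z₂).symm g with hu'def
    have hu' : ∀ y : Z₂, ⟪u', y⟫ = g y := fun y => InnerProductSpace.toDual_symm_apply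
    refine ⟨(D.orthogonalProjectionOnto u' : Z₂), SetLike.coe_mem _, ?_, ?_⟩
    · intro z
      have hmem : adjoint G z ∈ p := LinearMap.mem_range_self _ z
      have hDmem : adjoint G z ∈ D := Submodule.le_topologicalClosure p hmem
      have horth : u' - (D.orthogonalProjectionOnto u' : Z₂) ∈ Dᗮ :=
        sub_orthogonalProjection_mem_orthogonal (K := D) u'
      have h0 : ⟪adjoint G z, u' - (D.orthogonalProjectionOnto u' : Z₂)⟫ = 0 :=
        horth _ hDmem
      have h0' : ⟪u' - (D.orthogonalProjectionOnto u' : Z₂), adjoint G z⟫ = 0 :=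
        inner_eq_zero_symm.1 h0
      rw [inner_sub_left, sub_eq_zero] at h0'
      have hval : g (adjoint G z) = ⟪x, adjoint F z⟫ := by
        have := hg ⟨adjoint G z, hmem⟩
        rw [this]
        show f0 ⟨adjoint G z, hmem⟩ = _
        have h : adjoint G (zc ⟨adjoint G z, hmem⟩) = adjoint G z := hzc _
        show ⟪x, adjoint F (zc ⟨adjoint G z, hmem⟩)⟫ = ⟪x, adjoint F z⟫
        rw [heq _ _ h]
      rw [← h0', hu', hval]
    · have h1 : ‖(D.orthogonalProjectionOnto u' : Z₂)‖ ≤ ‖u'‖ := by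
        have hle := (D.orthogonalProjectionOnto).le_opNorm u'
        have hn1 : ‖D.orthogonalProjectionOnto‖ ≤ 1 := Submodule.orthogonalProjectionOnto_norm_le D
        have : ‖D.orthogonalProjectionOnto u'‖ ≤ ‖u'‖ := by
          nlinarith [norm_nonneg u']
        exact this
      have h2 : ‖u'‖ = ‖g‖ := by
        rw [hu'def]; exact LinearIsometryEquiv.norm_map _ _
      have h3 : ‖fc‖ ≤ c * ‖x‖ :=
        f0.mkContinuous_norm_le (by positivity) hb0
      calc ‖(D.orthogonalProjectionOnto u' : Z₂)‖ ≤ ‖u'‖ := h1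
        _ = ‖fc‖ := by rw [h2, hgnorm]
        _ ≤ c * ‖x‖ := h3
  choose Uf hUmem hUspec hUnorm using hf
  have hUadd : ∀ x y, Uf (x + y) = Uf x + Uf y := by
    intro x y
    refine huniq _ _ (hUmem _) (D.add_mem (hUmem x) (hUmem y)) fun z => ?_
    simp only [hUspec, inner_add_left]
  have hUsmul : ∀ (a : ℂ) (x : Z₁), Uf (a • x) = a • Uf x := by
    intro a x
    refine huniq _ _ (hUmem _) (D.smul_mem a (hUmem x)) fun z => ?_
    simp only [hUspec, inner_smul_left]
  have hGU : ∀ x : Z₁, G (Uf x) = F x := by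
    intro x
    refine (ext_inner_right ℂ fun z => ?_).symm
    rw [← adjoint_inner_right F, ← adjoint_inner_right G, hUspec]
  let Ulin : Z₁ →ₗ[ℂ] Z₂ := { toFun := Uf, map_add' := hUadd, map_smul' := hUsmul }
  refine ⟨Ulin.mkContinuous c fun x => hUnorm x, ?_⟩
  ext x
  exact (hGU x).symm

end Aux

/-- Douglas' range-inclusion / majorization / factorization lemma. -/
theorem douglas_lemma
    {Z₁ Z₂ Z₃ : Type*}
    [NormedAddCommGroup Z₁] [InnerProductSpace ℂ Z₁] [CompleteSpace Z₁]
    [NormedAddCommGroup Z₂] [InnerProductSpace ℂ Z₂] [CompleteSpace Z₂]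
    [NormedAddCommGroup Z₃] [InnerProductSpace ℂ Z₃] [CompleteSpace Z₃]
    (F : Z₁ →L[ℂ] Z₃) (G : Z₂ →L[ℂ] Z₃) :
    List.TFAE
      [Set.range F ⊆ Set.range G,
       ∃ c > 0, ∀ z : Z₃, ‖adjoint F z‖ ≤ c * ‖adjoint G z‖,
       ∃ U : Z₁ →L[ℂ] Z₂, F = G.comp U] := by
  tfae_have 1 → 3 := fun h => douglas_range_to_factor F G h
  tfae_have 3 → 1 := by
    rintro ⟨U, rfl⟩ y ⟨x, rfl⟩
    exact ⟨U x, rfl⟩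
  tfae_have 3 → 2 := by
    rintro ⟨U, rfl⟩
    refine ⟨‖adjoint U‖ + 1, by positivity, fun z => ?_⟩
    rw [adjoint_comp]
    calc ‖(adjoint U) ((adjoint G) z)‖ ≤ ‖adjoint U‖ * ‖(adjoint G) z‖ :=
          (adjoint U).le_opNorm _
      _ ≤ (‖adjoint U‖ + 1) * ‖(adjoint G) z‖ := by
          nlinarith [norm_nonneg ((adjoint G) z)]
  tfae_have 2 → 3 := by
    rintro ⟨c, hc, hb⟩
    exact douglas_majorize_to_factor F G hc hb
  tfae_finish
end

section
/- Let ε with 0 < ε < σ and f : [0,σ] → ℝ continuous. Then (1/ε)∫₀^ε f(s) ds = (1/σ)∫₀^σ f(s) ds − ∫_ε^σ (1/t²)(∫₀^t (f(t) − f(s)) ds) dt. -/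
open Set intervalIntegral

/-- The finite-`ε` averaging identity for continuous functions. -/
theorem averaging_identity_eps
    (σ ε : ℝ) (hε : 0 < ε) (hεσ : ε < σ) (f : ℝ → ℝ)
    (hf : ContinuousOn f (Set.Icc 0 σ)) :
    (1 / ε) * ∫ s in (0:ℝ)..ε, f s
      = (1 / σ) * (∫ s in (0:ℝ)..σ, f s)
        - ∫ t in ε..σ, (1 / t ^ 2) * ∫ s in (0:ℝ)..t, (f t - f s) := by
  have hσ : (0:ℝ) < σ := hε.trans hεσ
  set F : ℝ → ℝ := fun x => ∫ s in (0:ℝ)..x, f s with hF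
  have hfint : ∀ x ∈ Icc (0:ℝ) σ, IntervalIntegrable f MeasureTheory.volume 0 x := by
    intro x hx
    exact (hf.mono (Icc_subset_Icc le_rfl hx.2)).intervalIntegrable_of_Icc hx.1
  have hFcont : ContinuousOn F (Icc 0 σ) := by
    have h := intervalIntegral.continuousOn_primitive_interval
      (μ := MeasureTheory.volume) (f := f) (a := 0) (b := σ)
      (by rw [uIcc_of_le hσ.le]; exact hf.integrableOn_Icc)
    rwa [uIcc_of_le hσ.le] at h
  -- derivative of g t = F t / t on Ioo ε σ
  have hopen : IsOpen (Ioo (0:ℝ) σ) := isOpen_Ioo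
  have hfIoo : ContinuousOn f (Ioo 0 σ) := hf.mono Ioo_subset_Icc_self
  have hderiv : ∀ t ∈ Ioo ε σ,
      HasDerivAt (fun x => F x * x⁻¹) ((1 / t ^ 2) * (t * f t - F t)) t := by
    intro t ht
    have ht0 : 0 < t := hε.trans ht.1
    have htσ : t ∈ Ioo (0:ℝ) σ := ⟨ht0, ht.2⟩
    have hct : ContinuousAt f t := hfIoo.continuousAt (hopen.mem_nhds htσ)
    have hFd : HasDerivAt F (f t) t := by
      exact intervalIntegral.integral_hasDerivAt_right
        (hfint t ⟨ht0.le, ht.2.le⟩)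
        (hfIoo.stronglyMeasurableAtFilter hopen t htσ) hct
    have hinv : HasDerivAt (fun x : ℝ => x⁻¹) (-(t ^ 2)⁻¹) t := hasDerivAt_inv ht0.ne'
    have : HasDerivAt (fun x => F x * x⁻¹) (f t * t⁻¹ + F t * -(t ^ 2)⁻¹) t :=
      hFd.fun_mul hinv
    convert this using 1
    field_simp
    ring
  have hg'cont : ContinuousOn (fun t => (1 / t ^ 2) * (t * f t - F t)) (Icc ε σ) := by
    have hsub : Icc ε σ ⊆ Icc (0:ℝ) σ := Icc_subset_Icc hε.le le_rfl
    apply ContinuousOn.mul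
    · apply ContinuousOn.div continuousOn_const (continuousOn_pow 2)
      intro t ht
      have : 0 < t := hε.trans_le ht.1
      positivity
    · exact ((continuousOn_id.mul (hf.mono hsub)).sub (hFcont.mono hsub))
  have hFTC : ∫ t in ε..σ, (1 / t ^ 2) * (t * f t - F t)
      = F σ * σ⁻¹ - F ε * ε⁻¹ := by
    apply intervalIntegral.integral_eq_sub_of_hasDerivAt_of_le hεσ.le
    · apply ContinuousOn.mul (hFcont.mono (Icc_subset_Icc hε.le le_rfl))
      apply ContinuousOn.inv₀ continuousOn_id
      intro t ht; exact (hε.trans_le ht.1).ne'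
    · exact hderiv
    · exact hg'cont.intervalIntegrable_of_Icc hεσ.le
  have hcongr : ∫ t in ε..σ, (1 / t ^ 2) * ∫ s in (0:ℝ)..t, (f t - f s)
      = ∫ t in ε..σ, (1 / t ^ 2) * (t * f t - F t) := by
    apply intervalIntegral.integral_congr
    intro t ht
    rw [uIcc_of_le hεσ.le] at ht
    have ht0 : 0 < t := hε.trans_le ht.1
    have h1 : ∫ s in (0:ℝ)..t, (f t - f s) = t * f t - F t := by
      rw [intervalIntegral.integral_sub intervalIntegrable_const
        (hfint t ⟨ht0.le, ht.2⟩), intervalIntegral.integral_const]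
      simp [mul_comm]
      rfl
    simp only [h1]
  rw [hcongr, hFTC]
  field_simp [hF]
  ring
end
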